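/- Let G be a homocyclic abelian p-group of exponent p^i with d generators (i.e., G ≅ (Z/p^i Z)^d), and let 0 ≤ ν ≤ d. The number of subgroups H of G isomorphic to (Z/p^i Z)^ν (i.e., of layer type ν repeated i times) is at least p^{iν(d−ν)}. -/

import Mathlib

theorem count_homocyclic_subgroups_ge (p i d ν : ℕ) (hp : p.Prime) (hi : 0 < i)
    (hν : ν ≤ d) :
    p ^ (i * ν * (d - ν)) ≤
      Nat.card {H : AddSubgroup (Fin d → ZMod (p ^ i)) //
        Nonempty (H ≃+ (Fin ν → ZMod (p ^ i)))} := by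
  set q := p ^ i with hq
  haveI : NeZero q := ⟨pow_ne_zero _ hp.pos.ne'⟩
  haveI : Fact p.Prime := ⟨hp⟩
  -- equiv between Fin d and Fin ν ⊕ Fin (d - ν)
  have hd : ν + (d - ν) = d := Nat.add_sub_cancel' hν
  let eFin : Fin ν ⊕ Fin (d - ν) ≃ Fin d := finSumFinEquiv.trans (finCongr hd)
  let e : (Fin ν ⊕ Fin (d - ν) → ZMod q) ≃+ (Fin d → ZMod q) :=
    AddEquiv.arrowCongr eFin (AddEquiv.refl _)
  -- for each matrix M define an injective hom whose range is the graph subgroup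
  let f : (Fin ν → Fin (d - ν) → ZMod q) → (Fin ν → ZMod q) →+
      (Fin ν ⊕ Fin (d - ν) → ZMod q) := fun M =>
    { toFun := fun x => Sum.elim x (fun j => ∑ k, x k * M k j)
      map_zero' := by ext (a | b) <;> simp
      map_add' := by
        intro x y
        ext (a | b) <;> simp [add_mul, Finset.sum_add_distrib] }
  have hfinj : ∀ M, Function.Injective (f M) := by
    intro M x y h
    funext a
    have := congrFun h (Sum.inl a)
    simpa [f] using this
  -- the map into the subtype
  let F : (Fin ν → Fin (d - ν) → ZMod q) →
      {H : AddSubgroup (Fin d → ZMod q) // Nonempty (H ≃+ (Fin ν → ZMod q))} := fun M =>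
    ⟨((f M).range).map e.toAddMonoidHom,
      ⟨((AddMonoidHom.ofInjective (f := f M) (hfinj M)).trans
          (AddSubgroup.equivMapOfInjective _ e.toAddMonoidHom e.injective)).symm⟩⟩
  have hFinj : Function.Injective F := by
    intro M N h
    have h1 : ((f M).range).map e.toAddMonoidHom = ((f N).range).map e.toAddMonoidHom := by
      simpa [F] using congrArg Subtype.val h
    have h2 : (f M).range = (f N).range :=
      AddSubgroup.map_injective e.injective h1
    funext k j
    have hmem : f M (Pi.single k 1) ∈ (f N).range := by
      rw [← h2]; exact ⟨Pi.single k 1, rfl⟩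
    obtain ⟨y, hy⟩ := hmem
    have hyx : y = Pi.single k 1 := by
      funext a
      have := congrFun hy (Sum.inl a)
      simpa [f] using this
    have := congrFun hy (Sum.inr j)
    rw [hyx] at this
    simpa [f, Pi.single_apply, Finset.sum_ite_eq', ite_mul] using this.symm
  calc p ^ (i * ν * (d - ν)) = Nat.card (Fin ν → Fin (d - ν) → ZMod q) := by
        simp [Nat.card_fun, Nat.card_eq_fintype_card, ZMod.card, hq, ← pow_mul, mul_assoc, mul_comm (d - ν) ν]
    _ ≤ _ := Nat.card_le_card_of_injective F hFinj
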